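/- Double robustness of AIPW (propensity correct, outcome model possibly wrong): if e(X) is the true propensity score with c₁ ≤ e(X) ≤ c₂ for 0 < c₁ ≤ c₂ < 1, and m₁(X), m₀(X) are any bounded measurable functions, then under ignorability E[ AY/e(X) + (1 − A/e(X))·m₁(X) − (1−A)Y/(1−e(X)) − (1 − (1−A)/(1−e(X)))·m₀(X) ] = τ₀. -/

import Mathlib

open MeasureTheory ProbabilityTheory

section Aux

variable {Ω : Type*} {m' : MeasurableSpace Ω} {mΩ : MeasurableSpace Ω} [StandardBorelSpace Ω]

/-- Conditional independence is stable under a.e. modification of the first function. -/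
lemma condIndepFun_congr_left (hm' : m' ≤ mΩ) {μ : Measure Ω} [IsFiniteMeasure μ]
    {W W' B : Ω → ℝ} (h : CondIndepFun m' hm' W B μ) (hWW' : W =ᵐ[μ] W') :
    CondIndepFun m' hm' W' B μ := by
  rintro t1 t2 ⟨s, hs, rfl⟩ ht2
  set N := toMeasurable μ {ω | W ω ≠ W' ω} with hN
  have hNmeas : MeasurableSet N := measurableSet_toMeasurable _ _
  have hNnull : μ N = 0 := by
    rw [measure_toMeasurable]
    exact hWW'
  have hsubN : {ω | W ω ≠ W' ω} ⊆ N := subset_toMeasurable _ _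
  have hcond : (μ⟦N | m'⟧) =ᵐ[μ] 0 := by
    have h0 : (N.indicator (fun _ => (1 : ℝ))) =ᵐ[μ] (0 : Ω → ℝ) := by
      filter_upwards [measure_eq_zero_iff_ae_notMem.mp hNnull] with ω hω
      simp [Set.indicator_of_notMem hω]
    calc (μ⟦N | m'⟧) =ᵐ[μ] μ[(0 : Ω → ℝ)|m'] := condExp_congr_ae h0
    _ = 0 := condExp_zero
  have hker0 : ∀ᵐ ω ∂μ.trim hm', condExpKernel μ m' ω N = 0 := by
    have h1 : ∀ᵐ ω ∂μ, (condExpKernel μ m' ω N).toReal = 0 := by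
      filter_upwards [(condExpKernel_ae_eq_condExp hm' hNmeas).trans hcond] with ω hω
      simp at hω
      exact hω
    have h2 : ∀ᵐ ω ∂μ, condExpKernel μ m' ω N = 0 := by
      filter_upwards [h1] with ω hω
      have hfin := measure_ne_top (condExpKernel μ m' ω) N
      rcases (ENNReal.toReal_eq_zero_iff _).mp hω with h | h
      · exact h
      · exact absurd h hfin
    have hfmeas : Measurable[m'] fun ω => condExpKernel μ m' ω N :=
      measurable_condExpKernel hNmeas
    have hS : MeasurableSet[m'] {ω | ¬ condExpKernel μ m' ω N = 0} :=
      (hfmeas (measurableSet_singleton 0)).compl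
    rw [ae_iff, trim_measurableSet_eq hm' hS]
    exact ae_iff.mp h2
  filter_upwards [h (W ⁻¹' s) t2 ⟨s, hs, rfl⟩ ht2, hker0] with ω hω hN0
  have hae1 : (W' ⁻¹' s : Set Ω) =ᵐ[condExpKernel μ m' ω] (W ⁻¹' s : Set Ω) := by
    rw [MeasureTheory.ae_eq_set]
    constructor
    · refine measure_mono_null (fun x hx => hsubN ?_) hN0
      intro hWW
      exact hx.2 (show W x ∈ s by rw [hWW]; exact hx.1)
    · refine measure_mono_null (fun x hx => hsubN ?_) hN0
      intro hWW
      exact hx.2 (show W' x ∈ s by rw [← hWW]; exact hx.1)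
  have hae2 : ((W' ⁻¹' s ∩ t2 : Set Ω)) =ᵐ[condExpKernel μ m' ω] ((W ⁻¹' s ∩ t2 : Set Ω)) :=
    hae1.inter (Filter.EventuallyEq.refl _ _)
  rw [measure_congr hae2, measure_congr hae1]
  exact hω

/-- Conditional expectation of a product of conditionally independent functions. -/
lemma condexp_mul_aux (hm' : m' ≤ mΩ) (μ : Measure Ω) [IsProbabilityMeasure μ]
    {W B : Ω → ℝ} (hW : Measurable W) (hWint : Integrable W μ)
    (hB : Measurable B) (hBbdd : ∀ ω, |B ω| ≤ 1)
    (hig : CondIndepFun m' hm' W B μ) :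
    μ[fun ω => W ω * B ω|m'] =ᵐ[μ] fun ω => (μ[W|m']) ω * (μ[B|m']) ω := by
  have hBint : Integrable B μ :=
    (integrable_const (1 : ℝ)).mono' hB.aestronglyMeasurable
      (Filter.Eventually.of_forall fun ω => by simpa [Real.norm_eq_abs] using hBbdd ω)
  have hWBint : Integrable (fun ω => W ω * B ω) μ := by
    have := hWint.bdd_mul (c := 1) hB.aestronglyMeasurable
      (Filter.Eventually.of_forall fun ω => by simpa [Real.norm_eq_abs] using hBbdd ω)
    exact this.congr (Filter.Eventually.of_forall fun ω => mul_comm _ _)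
  have hae : ∀ᵐ ω ∂μ, ∀ q r : ℚ,
      condExpKernel μ m' ω (W ⁻¹' Set.Iic (q : ℝ) ∩ B ⁻¹' Set.Iic (r : ℝ))
        = condExpKernel μ m' ω (W ⁻¹' Set.Iic (q : ℝ))
          * condExpKernel μ m' ω (B ⁻¹' Set.Iic (r : ℝ)) := by
    rw [ae_all_iff]
    intro q
    rw [ae_all_iff]
    intro r
    exact ae_of_ae_trim hm'
      (hig _ _ ⟨_, measurableSet_Iic, rfl⟩ ⟨_, measurableSet_Iic, rfl⟩)
  have hWκ : ∀ᵐ ω ∂μ, Integrable W (condExpKernel μ m' ω) := hWint.condExpKernel_ae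
  have hmul : ∀ᵐ ω ∂μ, ∫ y, W y * B y ∂(condExpKernel μ m' ω)
      = (∫ y, W y ∂(condExpKernel μ m' ω)) * ∫ y, B y ∂(condExpKernel μ m' ω) := by
    filter_upwards [hae, hWκ] with ω hω hWω
    have hBω : Integrable B (condExpKernel μ m' ω) :=
      (integrable_const (1 : ℝ)).mono' hB.aestronglyMeasurable
        (Filter.Eventually.of_forall fun x => by simpa [Real.norm_eq_abs] using hBbdd x)
    have hgen : (inferInstance : MeasurableSpace ℝ)
        = MeasurableSpace.generateFrom (⋃ a : ℚ, {Set.Iic (a : ℝ)}) := by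
      rw [BorelSpace.measurable_eq (α := ℝ), Real.borel_eq_generateFrom_Iic_rat]
    have hindep : IndepFun W B (condExpKernel μ m' ω) := by
      have h1 : MeasurableSpace.comap W (inferInstance : MeasurableSpace ℝ)
          = MeasurableSpace.generateFrom
            (Set.preimage W '' (⋃ a : ℚ, {Set.Iic (a : ℝ)})) := by
        conv_lhs => rw [hgen]
        rw [MeasurableSpace.comap_generateFrom]
      have h2 : MeasurableSpace.comap B (inferInstance : MeasurableSpace ℝ)
          = MeasurableSpace.generateFrom
            (Set.preimage B '' (⋃ a : ℚ, {Set.Iic (a : ℝ)})) := by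
        conv_lhs => rw [hgen]
        rw [MeasurableSpace.comap_generateFrom]
      have hpi1 : IsPiSystem (Set.preimage W '' (⋃ a : ℚ, {Set.Iic (a : ℝ)})) :=
        Real.isPiSystem_Iic_rat.comap W
      have hpi2 : IsPiSystem (Set.preimage B '' (⋃ a : ℚ, {Set.Iic (a : ℝ)})) :=
        Real.isPiSystem_Iic_rat.comap B
      have hsets : IndepSets (Set.preimage W '' (⋃ a : ℚ, {Set.Iic (a : ℝ)}))
          (Set.preimage B '' (⋃ a : ℚ, {Set.Iic (a : ℝ)})) (condExpKernel μ m' ω) := by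
        rintro t1 t2 ⟨s1, hs1, rfl⟩ ⟨s2, hs2, rfl⟩
        simp only [Set.mem_iUnion, Set.mem_singleton_iff] at hs1 hs2
        obtain ⟨q, rfl⟩ := hs1
        obtain ⟨r, rfl⟩ := hs2
        simp only [Kernel.const_apply, MeasureTheory.ae_dirac_eq, Filter.eventually_pure]
        exact hω q r
      exact IndepSets.indep hW.comap_le hB.comap_le hpi1 hpi2 h1 h2 hsets
    exact IndepFun.integral_mul_eq_mul_integral hindep hWω.1 hBω.1
  calc μ[fun ω => W ω * B ω|m']
      =ᵐ[μ] fun ω => ∫ y, W y * B y ∂(condExpKernel μ m' ω) :=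
        condExp_ae_eq_integral_condExpKernel hm' hWBint
    _ =ᵐ[μ] fun ω => (∫ y, W y ∂(condExpKernel μ m' ω))
        * ∫ y, B y ∂(condExpKernel μ m' ω) := hmul
    _ =ᵐ[μ] fun ω => (μ[W|m']) ω * (μ[B|m']) ω := by
        filter_upwards [condExp_ae_eq_integral_condExpKernel hm' hWint,
          condExp_ae_eq_integral_condExpKernel hm' hBint] with ω h1 h2
        rw [h1, h2]

/-- The compensation term in the AIPW estimator has zero expectation. -/
lemma compensation_zero (hm' : m' ≤ mΩ) (μ : Measure Ω) [IsProbabilityMeasure μ]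
    (B b W ψ φ : Ω → ℝ)
    (hB : Measurable B) (hBbdd : ∀ ω, |B ω| ≤ 1)
    (hb : Measurable[m'] b) (hbbdd : ∀ ω, |b ω| ≤ 1) (hbB : b =ᵐ[μ] μ[B|m'])
    (hW : Measurable W) (hWint : Integrable W μ)
    (hψ : Measurable[m'] ψ) (Dψ : ℝ) (hψbdd : ∀ ω, |ψ ω| ≤ Dψ)
    (hφ : Measurable[m'] φ) (Dφ : ℝ) (hφbdd : ∀ ω, |φ ω| ≤ Dφ)
    (hig : CondIndepFun m' hm' W B μ) :
    ∫ ω, (B ω - b ω) * φ ω * (W ω - ψ ω) ∂μ = 0 := by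
  have hφΩ : Measurable φ := hφ.mono hm' le_rfl
  have hψΩ : Measurable ψ := hψ.mono hm' le_rfl
  have hbΩ : Measurable b := hb.mono hm' le_rfl
  have hψint : Integrable ψ μ :=
    (integrable_const Dψ).mono' hψΩ.aestronglyMeasurable
      (Filter.Eventually.of_forall fun ω => by simpa [Real.norm_eq_abs] using hψbdd ω)
  have hBint : Integrable B μ :=
    (integrable_const (1 : ℝ)).mono' hB.aestronglyMeasurable
      (Filter.Eventually.of_forall fun ω => by simpa [Real.norm_eq_abs] using hBbdd ω)
  have hWBint : Integrable (fun ω => W ω * B ω) μ := by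
    have := hWint.bdd_mul (c := 1) hB.aestronglyMeasurable
      (Filter.Eventually.of_forall fun ω => by simpa [Real.norm_eq_abs] using hBbdd ω)
    exact this.congr (Filter.Eventually.of_forall fun ω => mul_comm _ _)
  have hBφ : ∀ ω, ‖B ω * φ ω‖ ≤ 1 * Dφ := fun ω => by
    rw [Real.norm_eq_abs, abs_mul]
    exact mul_le_mul (hBbdd ω) (hφbdd ω) (abs_nonneg _) zero_le_one
  have hbφ : ∀ ω, ‖b ω * φ ω‖ ≤ 1 * Dφ := fun ω => by
    rw [Real.norm_eq_abs, abs_mul]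
    exact mul_le_mul (hbbdd ω) (hφbdd ω) (abs_nonneg _) zero_le_one
  have hφψ : ∀ ω, ‖φ ω * ψ ω‖ ≤ Dφ * Dψ := fun ω => by
    rw [Real.norm_eq_abs, abs_mul]
    exact mul_le_mul (hφbdd ω) (hψbdd ω) (abs_nonneg _)
      (le_trans (abs_nonneg _) (hφbdd ω))
  have I1 : Integrable (fun ω => B ω * φ ω * W ω) μ :=
    hWint.bdd_mul (c := 1 * Dφ) ((hB.mul hφΩ).aestronglyMeasurable)
      (Filter.Eventually.of_forall hBφ)
  have I2 : Integrable (fun ω => B ω * φ ω * ψ ω) μ :=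
    hψint.bdd_mul (c := 1 * Dφ) ((hB.mul hφΩ).aestronglyMeasurable)
      (Filter.Eventually.of_forall hBφ)
  have I3 : Integrable (fun ω => b ω * φ ω * W ω) μ :=
    hWint.bdd_mul (c := 1 * Dφ) ((hbΩ.mul hφΩ).aestronglyMeasurable)
      (Filter.Eventually.of_forall hbφ)
  have I4 : Integrable (fun ω => b ω * φ ω * ψ ω) μ :=
    hψint.bdd_mul (c := 1 * Dφ) ((hbΩ.mul hφΩ).aestronglyMeasurable)
      (Filter.Eventually.of_forall hbφ)
  have hsplit : ∫ ω, (B ω - b ω) * φ ω * (W ω - ψ ω) ∂μ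
      = ((∫ ω, B ω * φ ω * W ω ∂μ) - ∫ ω, B ω * φ ω * ψ ω ∂μ)
        - ((∫ ω, b ω * φ ω * W ω ∂μ) - ∫ ω, b ω * φ ω * ψ ω ∂μ) := by
    have I12 : Integrable (fun ω => B ω * φ ω * W ω - B ω * φ ω * ψ ω) μ := I1.sub I2
    have I34 : Integrable (fun ω => b ω * φ ω * W ω - b ω * φ ω * ψ ω) μ := I3.sub I4
    have heq : (fun ω => (B ω - b ω) * φ ω * (W ω - ψ ω))
        = fun ω => (B ω * φ ω * W ω - B ω * φ ω * ψ ω)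
          - (b ω * φ ω * W ω - b ω * φ ω * ψ ω) := by
      funext ω; ring
    rw [heq, integral_sub I12 I34, integral_sub I1 I2, integral_sub I3 I4]
  have hA1 : ∫ ω, B ω * φ ω * W ω ∂μ
      = ∫ ω, φ ω * ((μ[W|m']) ω * (μ[B|m']) ω) ∂μ := by
    have hmulWB := condexp_mul_aux hm' μ hW hWint hB hBbdd hig
    have hpull := condExp_stronglyMeasurable_mul_of_bound hm' hφ.stronglyMeasurable hWBint Dφ
      (Filter.Eventually.of_forall fun ω => by simpa [Real.norm_eq_abs] using hφbdd ω)
    calc ∫ ω, B ω * φ ω * W ω ∂μ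
        = ∫ ω, (φ * fun ω => W ω * B ω) ω ∂μ :=
          integral_congr_ae (Filter.Eventually.of_forall fun ω => by
            simp only [Pi.mul_apply]; ring)
      _ = ∫ ω, (μ[(φ * fun ω => W ω * B ω)|m']) ω ∂μ := (integral_condExp hm').symm
      _ = ∫ ω, φ ω * ((μ[W|m']) ω * (μ[B|m']) ω) ∂μ := by
          apply integral_congr_ae
          filter_upwards [hpull, hmulWB] with ω h1 h2
          rw [h1, Pi.mul_apply, h2]
  have hA3 : ∫ ω, b ω * φ ω * W ω ∂μ
      = ∫ ω, φ ω * ((μ[W|m']) ω * (μ[B|m']) ω) ∂μ := by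
    have hpull := condExp_stronglyMeasurable_mul_of_bound (f := fun ω => b ω * φ ω) hm' (hb.mul hφ).stronglyMeasurable
      hWint (1 * Dφ) (Filter.Eventually.of_forall hbφ)
    calc ∫ ω, b ω * φ ω * W ω ∂μ
        = ∫ ω, ((fun ω => b ω * φ ω) * W) ω ∂μ :=
          integral_congr_ae (Filter.Eventually.of_forall fun ω => by
            simp only [Pi.mul_apply])
      _ = ∫ ω, (μ[((fun ω => b ω * φ ω) * W)|m']) ω ∂μ := (integral_condExp hm').symm
      _ = ∫ ω, φ ω * ((μ[W|m']) ω * (μ[B|m']) ω) ∂μ := by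
          apply integral_congr_ae
          filter_upwards [hpull, hbB] with ω h1 h2
          rw [h1, Pi.mul_apply, h2]
          ring
  have hB1 : ∫ ω, B ω * φ ω * ψ ω ∂μ
      = ∫ ω, φ ω * ψ ω * (μ[B|m']) ω ∂μ := by
    have hpull := condExp_stronglyMeasurable_mul_of_bound (f := fun ω => φ ω * ψ ω) hm' (hφ.mul hψ).stronglyMeasurable
      hBint (Dφ * Dψ) (Filter.Eventually.of_forall hφψ)
    calc ∫ ω, B ω * φ ω * ψ ω ∂μ
        = ∫ ω, ((fun ω => φ ω * ψ ω) * B) ω ∂μ :=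
          integral_congr_ae (Filter.Eventually.of_forall fun ω => by
            simp only [Pi.mul_apply]; ring)
      _ = ∫ ω, (μ[((fun ω => φ ω * ψ ω) * B)|m']) ω ∂μ := (integral_condExp hm').symm
      _ = ∫ ω, φ ω * ψ ω * (μ[B|m']) ω ∂μ := by
          apply integral_congr_ae
          filter_upwards [hpull] with ω h1
          rw [h1, Pi.mul_apply]
  have hB2 : ∫ ω, b ω * φ ω * ψ ω ∂μ
      = ∫ ω, φ ω * ψ ω * (μ[B|m']) ω ∂μ := by
    apply integral_congr_ae
    filter_upwards [hbB] with ω h2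
    rw [h2]
    ring
  rw [hsplit, hA1, hA3, hB1, hB2]
  ring

end Aux

/-- Double robustness of AIPW, propensity correct: with the true propensity score `e(X)`
bounded in `[c₁, c₂] ⊂ (0,1)` and arbitrary bounded measurable outcome models `m1, m0`,
under ignorability the AIPW functional equals `τ₀ = E[Y(1) − Y(0)]`. -/
theorem aipw_doubly_robust_propensity_correct
    {Ω 𝒳 : Type*} [mΩ : MeasurableSpace Ω] [StandardBorelSpace Ω] [MeasurableSpace 𝒳]
    (μ : Measure Ω) [IsProbabilityMeasure μ]
    (X : Ω → 𝒳) (A : Ω → ℝ) (Y1 Y0 : Ω → ℝ)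
    (hX : Measurable X) (hA : Measurable A)
    (hY1 : Integrable Y1 μ) (hY0 : Integrable Y0 μ)
    (hAbin : ∀ ω, A ω = 0 ∨ A ω = 1)
    (Y : Ω → ℝ) (hY : ∀ ω, Y ω = A ω * Y1 ω + (1 - A ω) * Y0 ω)
    -- the true propensity score
    (e : 𝒳 → ℝ) (he : Measurable e)
    (heX : (fun ω => e (X ω)) =ᵐ[μ] μ[A | MeasurableSpace.comap X inferInstance])
    (c₁ c₂ : ℝ) (hc₁ : 0 < c₁) (hc₂ : c₂ < 1)
    (hoverlap : ∀ᵐ ω ∂μ, c₁ ≤ e (X ω) ∧ e (X ω) ≤ c₂)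
    -- ignorability
    (hig1 : CondIndepFun (MeasurableSpace.comap X inferInstance) hX.comap_le Y1 A μ)
    (hig0 : CondIndepFun (MeasurableSpace.comap X inferInstance) hX.comap_le Y0 A μ)
    -- arbitrary bounded measurable (possibly misspecified) outcome models
    (m1 m0 : 𝒳 → ℝ) (hm1 : Measurable m1) (hm0 : Measurable m0)
    (C : ℝ) (hm1bdd : ∀ x, |m1 x| ≤ C) (hm0bdd : ∀ x, |m0 x| ≤ C) :
    ∫ ω, (A ω * Y ω / e (X ω) + (1 - A ω / e (X ω)) * m1 (X ω)
        - (1 - A ω) * Y ω / (1 - e (X ω))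
        - (1 - (1 - A ω) / (1 - e (X ω))) * m0 (X ω)) ∂μ
      = ∫ ω, (Y1 ω - Y0 ω) ∂μ := by
  haveI : (ae μ).NeBot := ae_neBot.mpr (IsProbabilityMeasure.ne_zero μ)
  obtain ⟨ω₀, hω₀⟩ := hoverlap.exists
  have hc12 : c₁ ≤ c₂ := le_trans hω₀.1 hω₀.2
  set et : 𝒳 → ℝ := fun x => max c₁ (min (e x) c₂) with het_def
  have het : Measurable et := measurable_const.max (he.min measurable_const)
  have hetlb : ∀ x, c₁ ≤ et x := fun x => le_max_left _ _
  have hetub : ∀ x, et x ≤ c₂ := fun x => max_le hc12 (min_le_right _ _)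
  have hetpos : ∀ x, 0 < et x := fun x => lt_of_lt_of_le hc₁ (hetlb x)
  have het1 : ∀ x, et x < 1 := fun x => lt_of_le_of_lt (hetub x) hc₂
  have heet : (fun ω => et (X ω)) =ᵐ[μ] fun ω => e (X ω) := by
    filter_upwards [hoverlap] with ω h
    show max c₁ (min (e (X ω)) c₂) = e (X ω)
    rw [min_eq_left h.2, max_eq_right h.1]
  have hbB : (fun ω => et (X ω)) =ᵐ[μ] μ[A|MeasurableSpace.comap X inferInstance] :=
    heet.trans heX
  have hAbdd : ∀ ω, |A ω| ≤ 1 := fun ω => by rcases hAbin ω with h | h <;> simp [h]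
  have hAint : Integrable A μ :=
    (integrable_const (1 : ℝ)).mono' hA.aestronglyMeasurable
      (Filter.Eventually.of_forall fun ω => by simpa [Real.norm_eq_abs] using hAbdd ω)
  -- measurable versions of Y1, Y0
  set Z1 : Ω → ℝ := hY1.1.mk Y1 with hZ1_def
  set Z0 : Ω → ℝ := hY0.1.mk Y0 with hZ0_def
  have hZ1ae : Y1 =ᵐ[μ] Z1 := hY1.1.ae_eq_mk
  have hZ0ae : Y0 =ᵐ[μ] Z0 := hY0.1.ae_eq_mk
  have hZ1meas : Measurable Z1 := hY1.1.stronglyMeasurable_mk.measurable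
  have hZ0meas : Measurable Z0 := hY0.1.stronglyMeasurable_mk.measurable
  have hZ1int : Integrable Z1 μ := hY1.congr hZ1ae
  have hZ0int : Integrable Z0 μ := hY0.congr hZ0ae
  have hig1' := condIndepFun_congr_left hX.comap_le hig1 hZ1ae
  have hig0' := condIndepFun_congr_left hX.comap_le hig0 hZ0ae
  have hig0'' : CondIndepFun (MeasurableSpace.comap X inferInstance) hX.comap_le
      Z0 (fun ω => 1 - A ω) μ := by
    exact hig0'.comp (φ := id) (ψ := fun x : ℝ => 1 - x) measurable_id
      (measurable_const.sub measurable_id)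
  have hA'bdd : ∀ ω, |1 - A ω| ≤ 1 := fun ω => by rcases hAbin ω with h | h <;> simp [h]
  have hA'meas : Measurable (fun ω => 1 - A ω) := measurable_const.sub hA
  have hbB' : (fun ω => 1 - et (X ω))
      =ᵐ[μ] μ[fun ω => 1 - A ω|MeasurableSpace.comap X inferInstance] := by
    have hsub := condExp_sub (μ := μ) (m := MeasurableSpace.comap X inferInstance)
      (integrable_const (1 : ℝ)) hAint
    have hconst := condExp_const (μ := μ) hX.comap_le (1 : ℝ)
    have heq : μ[fun ω => 1 - A ω|MeasurableSpace.comap X inferInstance]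
        = μ[(fun _ => (1 : ℝ)) - A|MeasurableSpace.comap X inferInstance] := rfl
    filter_upwards [hsub, hbB] with ω h1 h2
    rw [heq, h1]
    simp only [Pi.sub_apply, hconst]
    rw [← h2]
  -- measurability with respect to the comap σ-algebra
  have hXm' : Measurable[MeasurableSpace.comap X inferInstance] X := fun s hs => ⟨s, hs, rfl⟩
  have hφ1 : Measurable[MeasurableSpace.comap X inferInstance]
      (fun ω => (et (X ω))⁻¹) := het.inv.comp hXm'
  have hφ0 : Measurable[MeasurableSpace.comap X inferInstance]
      (fun ω => (1 - et (X ω))⁻¹) := (measurable_const.sub het).inv.comp hXm'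
  have hψ1 : Measurable[MeasurableSpace.comap X inferInstance]
      (fun ω => m1 (X ω)) := hm1.comp hXm'
  have hψ0 : Measurable[MeasurableSpace.comap X inferInstance]
      (fun ω => m0 (X ω)) := hm0.comp hXm'
  have hb1 : Measurable[MeasurableSpace.comap X inferInstance]
      (fun ω => et (X ω)) := het.comp hXm'
  have hb0 : Measurable[MeasurableSpace.comap X inferInstance]
      (fun ω => 1 - et (X ω)) := measurable_const.sub hb1
  have hbbdd1 : ∀ ω, |et (X ω)| ≤ 1 := fun ω => by
    rw [abs_of_pos (hetpos _)]; exact le_of_lt (het1 _)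
  have hbbdd0 : ∀ ω, |1 - et (X ω)| ≤ 1 := fun ω => by
    rw [abs_of_pos (by linarith [het1 (X ω)])]
    linarith [hetpos (X ω)]
  have hφ1bdd : ∀ ω, |(et (X ω))⁻¹| ≤ c₁⁻¹ := fun ω => by
    rw [abs_of_pos (inv_pos.mpr (hetpos _))]
    exact inv_anti₀ hc₁ (hetlb _)
  have hφ0bdd : ∀ ω, |(1 - et (X ω))⁻¹| ≤ (1 - c₂)⁻¹ := fun ω => by
    rw [abs_of_pos (inv_pos.mpr (by linarith [het1 (X ω)]))]
    exact inv_anti₀ (by linarith) (by linarith [hetub (X ω)])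
  have key1 := compensation_zero hX.comap_le μ A (fun ω => et (X ω)) Z1
    (fun ω => m1 (X ω)) (fun ω => (et (X ω))⁻¹) hA hAbdd hb1 hbbdd1 hbB
    hZ1meas hZ1int hψ1 C (fun ω => hm1bdd _) hφ1 c₁⁻¹ hφ1bdd hig1'
  have key0 := compensation_zero hX.comap_le μ (fun ω => 1 - A ω) (fun ω => 1 - et (X ω)) Z0
    (fun ω => m0 (X ω)) (fun ω => (1 - et (X ω))⁻¹) hA'meas hA'bdd hb0 hbbdd0 hbB'
    hZ0meas hZ0int hψ0 C (fun ω => hm0bdd _) hφ0 (1 - c₂)⁻¹ hφ0bdd hig0''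
  -- integrability of the pieces
  have hm1int : Integrable (fun ω => m1 (X ω)) μ :=
    (integrable_const C).mono' (hm1.comp hX).aestronglyMeasurable
      (Filter.Eventually.of_forall fun ω => by simpa [Real.norm_eq_abs] using hm1bdd (X ω))
  have hm0int : Integrable (fun ω => m0 (X ω)) μ :=
    (integrable_const C).mono' (hm0.comp hX).aestronglyMeasurable
      (Filter.Eventually.of_forall fun ω => by simpa [Real.norm_eq_abs] using hm0bdd (X ω))
  have J1 : Integrable (fun ω => Y1 ω - Y0 ω) μ := hY1.sub hY0
  have J2 : Integrable (fun ω => (A ω - et (X ω)) * (et (X ω))⁻¹ * (Z1 ω - m1 (X ω))) μ := by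
    refine (hZ1int.sub hm1int).bdd_mul (c := 2 * c₁⁻¹)
      (((hA.sub (het.comp hX)).mul (het.comp hX).inv).aestronglyMeasurable)
      (Filter.Eventually.of_forall fun ω => ?_)
    rw [Real.norm_eq_abs, abs_mul]
    refine mul_le_mul ?_ (hφ1bdd ω) (abs_nonneg _) (by norm_num)
    rw [abs_le]
    constructor <;> rcases hAbin ω with h | h <;> rw [h] <;>
      [skip; skip; skip; skip] <;> nlinarith [hetpos (X ω), het1 (X ω)]
  have J3 : Integrable
      (fun ω => ((1 - A ω) - (1 - et (X ω))) * (1 - et (X ω))⁻¹ * (Z0 ω - m0 (X ω))) μ := by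
    refine (hZ0int.sub hm0int).bdd_mul (c := 2 * (1 - c₂)⁻¹)
      (((hA'meas.sub (measurable_const.sub (het.comp hX))).mul
        (measurable_const.sub (het.comp hX)).inv).aestronglyMeasurable)
      (Filter.Eventually.of_forall fun ω => ?_)
    rw [Real.norm_eq_abs, abs_mul]
    refine mul_le_mul ?_ (hφ0bdd ω) (abs_nonneg _) (by norm_num)
    rw [abs_le]
    constructor <;> rcases hAbin ω with h | h <;> rw [h] <;>
      [skip; skip; skip; skip] <;> nlinarith [hetpos (X ω), het1 (X ω)]
  -- pointwise a.e. identity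
  have hFG : (fun ω => A ω * Y ω / e (X ω) + (1 - A ω / e (X ω)) * m1 (X ω)
        - (1 - A ω) * Y ω / (1 - e (X ω))
        - (1 - (1 - A ω) / (1 - e (X ω))) * m0 (X ω))
      =ᵐ[μ] (fun ω => (Y1 ω - Y0 ω)
        + (A ω - et (X ω)) * (et (X ω))⁻¹ * (Z1 ω - m1 (X ω))
        - ((1 - A ω) - (1 - et (X ω))) * (1 - et (X ω))⁻¹ * (Z0 ω - m0 (X ω))) := by
    filter_upwards [hoverlap, hZ1ae, hZ0ae] with ω h hz1 hz0
    have hetω : et (X ω) = e (X ω) := by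
      show max c₁ (min (e (X ω)) c₂) = e (X ω)
      rw [min_eq_left h.2, max_eq_right h.1]
    have hne : e (X ω) ≠ 0 := ne_of_gt (lt_of_lt_of_le hc₁ h.1)
    have hne1 : (1 : ℝ) - e (X ω) ≠ 0 := ne_of_gt (by linarith [lt_of_le_of_lt h.2 hc₂])
    rw [hetω, hY ω, ← hz1, ← hz0]
    rcases hAbin ω with hA0 | hA1
    · rw [hA0]; field_simp; ring
    · rw [hA1]; field_simp; ring
  have J12 : Integrable (fun ω => (Y1 ω - Y0 ω)
      + (A ω - et (X ω)) * (et (X ω))⁻¹ * (Z1 ω - m1 (X ω))) μ := J1.add J2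
  rw [integral_congr_ae hFG]
  rw [integral_sub J12 J3, integral_add J1 J2, key1, key0]
  ring
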